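/- Expanding the product ∏_{i=1}^k x_{v_i}^{-1}(p_{v_i}^+ + p_{v_i}^-) over the 2^k choices of sign gives: ∏ p_{v_i}^+/x_{v_i} + ∏ p_{v_i}^- /x_{v_i} + Σ over nonempty S ⊆ Z/kZ with S∩(S+1)=∅ of (-1)^{|S|+1} (∏_{i∈S} p_{v_i}^+ p_{v_{i+1}}^- /(x_{v_i} x_{v_{i+1}})) (∏_{i∉S∪(S+1)} x_{v_i}^{-1}(p_{v_i}^+ + p_{v_i}^-)). -/

import Mathlib

/-- The Laurent polynomial ring `ℤ[x₁^{±1},...,xₙ^{±1}]`. -/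
abbrev MvLaurent (n : ℕ) : Type := AddMonoidAlgebra ℤ (Fin n →₀ ℤ)

/-- The (invertible) variable `xᵢ` of the Laurent polynomial ring. -/
noncomputable def Xu {n : ℕ} (i : Fin n) : (MvLaurent n)ˣ :=
  Units.map (AddMonoidAlgebra.of ℤ (Fin n →₀ ℤ))
    (toUnits (Multiplicative.ofAdd (Finsupp.single i (1 : ℤ))))

/-- An ice quiver on `n` vertices. -/
structure IceQuiver (n : ℕ) where
  arrows : Fin n → Fin n → ℕ
  frozen : Fin n → Bool
  no_loops : ∀ i, arrows i i = 0
  no_two_cycles : ∀ i j, arrows i j = 0 ∨ arrows j i = 0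

/-- `pᵢ⁺`, the product of `x_{target(a)}` over arrows `a` with source `i`. -/
noncomputable def Pp {n : ℕ} (Q : IceQuiver n) (i : Fin n) : (MvLaurent n)ˣ :=
  ∏ j, (Xu j) ^ (Q.arrows i j)

/-- `pᵢ⁻`, the product of `x_{source(a)}` over arrows `a` with target `i`. -/
noncomputable def Pm {n : ℕ} (Q : IceQuiver n) (i : Fin n) : (MvLaurent n)ˣ :=
  ∏ j, (Xu j) ^ (Q.arrows j i)

/-- `xᵢ⁻¹(pᵢ⁺ + pᵢ⁻)`. -/
noncomputable def invTimesSum {n : ℕ} (Q : IceQuiver n) (i : Fin n) : MvLaurent n :=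
  (((Xu i)⁻¹ : (MvLaurent n)ˣ) : MvLaurent n) * ((Pp Q i : MvLaurent n) + (Pm Q i : MvLaurent n))

open Finset

section Key
open Fin.NatCast
variable {R : Type*} [CommRing R] {k : ℕ} [NeZero k]

lemma cyclic_closure (T : Finset (Fin k))
    (h : ∀ i ∈ T, i + 1 ∈ T) (hne : T.Nonempty) : T = univ := by
  obtain ⟨i0, hi0⟩ := hne
  have key : ∀ m : ℕ, i0 + (m : Fin k) ∈ T := by
    intro m
    induction m with
    | zero => simpa using hi0
    | succ m ih =>
      have e : ((m + 1 : ℕ) : Fin k) = (m : Fin k) + 1 := by push_cast; ring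
      rw [e, ← add_assoc]
      exact h _ ih
  ext j
  simp only [mem_univ, iff_true]
  have := key ((j - i0).val)
  rwa [Fin.cast_val_eq_self, show i0 + (j - i0) = j by abel] at this

lemma key_expansion (a b : Fin k → R) :
    ∏ i : Fin k, (a i + b i)
      = (∏ i : Fin k, a i) + (∏ i : Fin k, b i)
        + ∑ S ∈ univ.filter (fun S : Finset (Fin k) => S.Nonempty ∧ ∀ i ∈ S, i + 1 ∉ S),
            (-1 : R) ^ (S.card + 1) * (∏ i ∈ S, a i * b (i + 1)) *
              ∏ i ∈ (S ∪ S.image (· + 1))ᶜ, (a i + b i) := by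
  classical
  set A : Finset (Fin k) → R := fun T => (∏ i ∈ T, a i) * ∏ i ∈ Tᶜ, b i with hA
  set D : Finset (Fin k) → Finset (Fin k) :=
    fun T => T.filter (fun i => i + 1 ∉ T) with hD
  have hinj : Function.Injective (· + 1 : Fin k → Fin k) := add_left_injective 1
  -- per (S, U) product identity
  have hprod : ∀ S : Finset (Fin k), (∀ i ∈ S, i + 1 ∉ S) →
      ∀ U ∈ ((S ∪ S.image (· + 1))ᶜ).powerset,
      (∏ i ∈ S, a i * b (i + 1)) *
        ((∏ i ∈ U, a i) * ∏ i ∈ (S ∪ S.image (· + 1))ᶜ \ U, b i) = A (S ∪ U) := by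
    intro S hS U hU
    rw [mem_powerset] at hU
    have hSU : Disjoint S U := by
      refine Finset.disjoint_left.mpr fun x hx hxU => ?_
      have := hU hxU
      simp only [mem_compl, mem_union] at this
      exact this (Or.inl hx)
    have hsplit : ∏ i ∈ S, (a i * b (i + 1))
        = (∏ i ∈ S, a i) * ∏ j ∈ S.image (· + 1), b j := by
      rw [prod_mul_distrib, prod_image (fun x _ y _ h => hinj h)]
    have hset : S.image (· + 1) ∪ ((S ∪ S.image (· + 1))ᶜ \ U) = (S ∪ U)ᶜ := by
      ext x
      have h1 : x ∈ S.image (· + 1) → x ∉ S := by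
        intro hx hxS
        obtain ⟨i, hiS, rfl⟩ := mem_image.mp hx
        exact hS i hiS hxS
      have h2 : x ∈ U → x ∉ S ∧ x ∉ S.image (· + 1) := by
        intro hx
        have := hU hx
        simp only [mem_compl, mem_union, not_or] at this
        exact this
      simp only [mem_union, mem_sdiff, mem_compl, mem_union, not_or]
      tauto
    have hdisj2 : Disjoint (S.image (· + 1)) ((S ∪ S.image (· + 1))ᶜ \ U) := by
      refine Finset.disjoint_left.mpr fun x hx hx2 => ?_
      have := (mem_sdiff.mp hx2).1
      simp only [mem_compl, mem_union] at this
      exact this (Or.inr hx)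
    rw [hsplit]
    simp only [hA]
    rw [← hset, prod_union hdisj2, prod_union hSU]
    ring
  -- rewrite each summand of the correction sum via prod_add
  have hstep1 :
      ∑ S ∈ univ.filter (fun S : Finset (Fin k) => S.Nonempty ∧ ∀ i ∈ S, i + 1 ∉ S),
        (-1 : R) ^ (S.card + 1) * (∏ i ∈ S, a i * b (i + 1)) *
          ∏ i ∈ (S ∪ S.image (· + 1))ᶜ, (a i + b i)
      = ∑ S ∈ univ.filter (fun S : Finset (Fin k) => S.Nonempty ∧ ∀ i ∈ S, i + 1 ∉ S),
          ∑ U ∈ ((S ∪ S.image (· + 1))ᶜ).powerset, (-1 : R) ^ (S.card + 1) * A (S ∪ U) := by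
    refine sum_congr rfl fun S hS => ?_
    simp only [mem_filter] at hS
    rw [prod_add, Finset.mul_sum]
    refine sum_congr rfl fun U hU => ?_
    rw [mul_assoc, hprod S hS.2.2 U hU]
  rw [hstep1]
  -- reindex as a sigma sum over (T, S)
  rw [Finset.sum_sigma']
  have hstep2 :
      ∑ p ∈ (univ.filter (fun S : Finset (Fin k) => S.Nonempty ∧ ∀ i ∈ S, i + 1 ∉ S)).sigma
          (fun S => ((S ∪ S.image (· + 1))ᶜ).powerset),
        (-1 : R) ^ (p.1.card + 1) * A (p.1 ∪ p.2)
      = ∑ p ∈ (univ : Finset (Finset (Fin k))).sigma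
          (fun T => (D T).powerset.filter (·.Nonempty)),
        (-1 : R) ^ (p.2.card + 1) * A p.1 := by
    refine Finset.sum_nbij' (fun p => ⟨p.1 ∪ p.2, p.1⟩) (fun p => ⟨p.2, p.1 \ p.2⟩)
      ?_ ?_ ?_ ?_ ?_
    · rintro ⟨S, U⟩ hp
      rw [mem_sigma] at hp
      have hPS := (mem_filter.mp hp.1).2
      have hU := mem_powerset.mp hp.2
      rw [mem_sigma, mem_filter]
      refine ⟨mem_univ _, mem_powerset.mpr ?_, hPS.1⟩
      intro i hi
      simp only [hD, mem_filter, mem_union]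
      refine ⟨Or.inl hi, ?_⟩
      rintro (h1 | h1)
      · exact hPS.2 i hi h1
      · have := hU h1
        simp only [mem_compl, mem_union] at this
        exact this (Or.inr (mem_image.mpr ⟨i, hi, rfl⟩))
    · rintro ⟨T, S⟩ hp
      rw [mem_sigma, mem_filter] at hp
      obtain ⟨-, hSD', hne⟩ := hp
      have hSD := mem_powerset.mp hSD'
      have hST : S ⊆ T := fun i hi => (mem_filter.mp (hSD hi)).1
      rw [mem_sigma, mem_filter, mem_powerset]
      refine ⟨⟨mem_univ _, hne, ?_⟩, ?_⟩
      · intro i hi hi1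
        exact (mem_filter.mp (hSD hi)).2 (hST hi1)
      · intro x hx
        rw [mem_sdiff] at hx
        simp only [mem_compl, mem_union, not_or]
        refine ⟨hx.2, ?_⟩
        intro h
        obtain ⟨i, hiS, rfl⟩ := mem_image.mp h
        exact (mem_filter.mp (hSD hiS)).2 hx.1
    · rintro ⟨S, U⟩ hp
      rw [mem_sigma] at hp
      have hU := mem_powerset.mp hp.2
      have hSU : Disjoint S U := by
        refine Finset.disjoint_left.mpr fun x hx hxU => ?_
        have := hU hxU
        simp only [mem_compl, mem_union] at this
        exact this (Or.inl hx)
      simp [Finset.union_sdiff_cancel_left hSU]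
    · rintro ⟨T, S⟩ hp
      rw [mem_sigma, mem_filter] at hp
      obtain ⟨-, hSD', hne⟩ := hp
      have hSD := mem_powerset.mp hSD'
      have hST : S ⊆ T := fun i hi => (mem_filter.mp (hSD hi)).1
      simp [Finset.union_sdiff_of_subset hST]
    · rintro ⟨S, U⟩ hp
      rfl
  rw [hstep2, Finset.sum_sigma]
  -- compute the inner sum
  have hinner : ∀ T : Finset (Fin k),
      ∑ S ∈ (D T).powerset.filter (·.Nonempty), (-1 : R) ^ (S.card + 1) * A T
      = (if D T = ∅ then 0 else 1) * A T := by
    intro T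
    rw [← sum_mul]
    congr 1
    have hfe : (D T).powerset.filter (·.Nonempty) = (D T).powerset.erase ∅ := by
      ext S
      simp [Finset.nonempty_iff_ne_empty, and_comm]
    rw [hfe]
    have hmem : (∅ : Finset (Fin k)) ∈ (D T).powerset := by simp
    have := Finset.add_sum_erase _ (fun S : Finset (Fin k) => (-1 : R) ^ (S.card + 1)) hmem
    have hall : ∑ S ∈ (D T).powerset, (-1 : R) ^ (S.card + 1)
        = if D T = ∅ then -1 else 0 := by
      have : ∑ S ∈ (D T).powerset, (-1 : R) ^ (S.card + 1)
          = -∑ S ∈ (D T).powerset, (-1 : R) ^ S.card := by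
        rw [← sum_neg_distrib]
        exact sum_congr rfl fun S _ => by ring
      rw [this]
      have hz : ∑ S ∈ (D T).powerset, (-1 : R) ^ S.card
          = ((∑ S ∈ (D T).powerset, (-1 : ℤ) ^ S.card : ℤ) : R) := by push_cast; rfl
      rw [hz, Finset.sum_powerset_neg_one_pow_card]
      split <;> simp
    have hkey : ∑ S ∈ (D T).powerset.erase ∅, (-1 : R) ^ (S.card + 1)
        = (∑ S ∈ (D T).powerset, (-1 : R) ^ (S.card + 1)) - (-1 : R) ^ (0 + 1) := by
      rw [← this]; simp
    rw [hkey, hall]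
    split <;> ring
  rw [Finset.sum_congr rfl (fun T _ => hinner T)]
  -- split off the T with D T = ∅, i.e. T = ∅ or T = univ
  have hDempty : ∀ T : Finset (Fin k), D T = ∅ ↔ (T = ∅ ∨ T = univ) := by
    intro T
    constructor
    · intro h
      rcases T.eq_empty_or_nonempty with h' | h'
      · exact Or.inl h'
      · refine Or.inr (cyclic_closure T (fun i hi => ?_) h')
        by_contra hc
        have : i ∈ D T := by simp [hD, hi, hc]
        simp [h] at this
    · rintro (rfl | rfl) <;> simp [hD]
  have hmain : ∑ T ∈ (univ : Finset (Finset (Fin k))), (if D T = ∅ then 0 else 1) * A T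
      = (∑ T ∈ (univ : Finset (Finset (Fin k))), A T) - A ∅ - A univ := by
    have hne : (∅ : Finset (Fin k)) ≠ univ := by
      have : (0 : Fin k) ∈ (univ : Finset (Fin k)) := mem_univ _
      intro h; rw [← h] at this; exact absurd this (notMem_empty _)
    have h1 : ∀ T : Finset (Fin k), (if D T = ∅ then (0:R) else 1) * A T
        = A T - (if T = ∅ ∨ T = univ then A T else 0) := by
      intro T
      by_cases h : D T = ∅
      · rw [if_pos h, if_pos ((hDempty T).mp h)]; ring
      · rw [if_neg h, if_neg (fun hc => h ((hDempty T).mpr hc))]; ring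
    rw [Finset.sum_congr rfl fun T _ => h1 T, Finset.sum_sub_distrib]
    have h2 : ∑ T ∈ (univ : Finset (Finset (Fin k))),
        (if T = ∅ ∨ T = univ then A T else 0) = A ∅ + A univ := by
      rw [← Finset.sum_filter]
      have hf : (univ : Finset (Finset (Fin k))).filter (fun T => T = ∅ ∨ T = univ)
          = {∅, univ} := by
        ext T; simp
      rw [hf, Finset.sum_pair hne]
    rw [h2]; ring
  rw [hmain]
  -- finally identify the pieces
  have hAe : A ∅ = ∏ i : Fin k, b i := by simp [hA]
  have hAu : A univ = ∏ i : Fin k, a i := by simp [hA]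
  have hlhs : ∏ i : Fin k, (a i + b i) = ∑ T ∈ (univ : Finset (Finset (Fin k))), A T := by
    rw [prod_add, Finset.powerset_univ]
    refine sum_congr rfl fun T _ => ?_
    rw [hA, ← Finset.compl_eq_univ_sdiff]
  rw [hlhs, hAe, hAu]
  ring
end Key

/-- Expanding the product `∏_{i=1}^k x_{vᵢ}⁻¹(p⁺_{vᵢ} + p⁻_{vᵢ})` over the `2^k` choices
of sign gives
`∏ p⁺_{vᵢ}/x_{vᵢ} + ∏ p⁻_{vᵢ}/x_{vᵢ} + ∑_{∅ ≠ S ⊆ ℤ/kℤ, S∩(S+1)=∅} (-1)^{|S|+1}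
  (∏_{i∈S} p⁺_{vᵢ}p⁻_{v_{i+1}}/(x_{vᵢ}x_{v_{i+1}})) (∏_{i∉S∪(S+1)} x_{vᵢ}⁻¹(p⁺_{vᵢ}+p⁻_{vᵢ}))`. -/


theorem product_expansion {n k : ℕ} [NeZero k] (Q : IceQuiver n) (v : Fin k → Fin n)
    (hcycle : ∀ i : Fin k, 0 < Q.arrows (v i) (v (i + 1)))
    (hunfrozen : ∀ i : Fin k, Q.frozen (v i) = false) :
    ∏ i : Fin k, invTimesSum Q (v i)
      = ((∏ i : Fin k, (Pp Q (v i) * (Xu (v i))⁻¹ : (MvLaurent n)ˣ) :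
            (MvLaurent n)ˣ) : MvLaurent n)
        + ((∏ i : Fin k, (Pm Q (v i) * (Xu (v i))⁻¹ : (MvLaurent n)ˣ) :
            (MvLaurent n)ˣ) : MvLaurent n)
        + ∑ S ∈ Finset.univ.filter
            (fun S : Finset (Fin k) => S.Nonempty ∧ ∀ i ∈ S, i + 1 ∉ S),
            (-1 : MvLaurent n) ^ (S.card + 1) *
              ((∏ i ∈ S,
                (Pp Q (v i) * Pm Q (v (i + 1)) * (Xu (v i))⁻¹ * (Xu (v (i + 1)))⁻¹ :
                  (MvLaurent n)ˣ) : (MvLaurent n)ˣ) : MvLaurent n) *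
              (∏ i ∈ (S ∪ S.image (· + 1))ᶜ, invTimesSum Q (v i)) := by
  classical
  set a : Fin k → MvLaurent n :=
    fun i => ((Pp Q (v i) * (Xu (v i))⁻¹ : (MvLaurent n)ˣ) : MvLaurent n) with ha
  set b : Fin k → MvLaurent n :=
    fun i => ((Pm Q (v i) * (Xu (v i))⁻¹ : (MvLaurent n)ˣ) : MvLaurent n) with hb
  have hsum : ∀ i, invTimesSum Q (v i) = a i + b i := by
    intro i
    simp only [invTimesSum, ha, hb, Units.val_mul, mul_add]
    ring
  have hu1 : ((∏ i : Fin k, (Pp Q (v i) * (Xu (v i))⁻¹ : (MvLaurent n)ˣ) :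
      (MvLaurent n)ˣ) : MvLaurent n) = ∏ i : Fin k, a i := by
    rw [← Units.coeHom_apply, map_prod]; rfl
  have hu2 : ((∏ i : Fin k, (Pm Q (v i) * (Xu (v i))⁻¹ : (MvLaurent n)ˣ) :
      (MvLaurent n)ˣ) : MvLaurent n) = ∏ i : Fin k, b i := by
    rw [← Units.coeHom_apply, map_prod]; rfl
  have hu3 : ∀ S : Finset (Fin k),
      ((∏ i ∈ S, (Pp Q (v i) * Pm Q (v (i + 1)) * (Xu (v i))⁻¹ * (Xu (v (i + 1)))⁻¹ :
        (MvLaurent n)ˣ) : (MvLaurent n)ˣ) : MvLaurent n) = ∏ i ∈ S, a i * b (i + 1) := by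
    intro S
    rw [← Units.coeHom_apply, map_prod]
    refine Finset.prod_congr rfl fun i _ => ?_
    simp only [Units.coeHom_apply, ha, hb, Units.val_mul]
    ring
  calc ∏ i : Fin k, invTimesSum Q (v i) = ∏ i : Fin k, (a i + b i) :=
        Finset.prod_congr rfl fun i _ => hsum i
    _ = _ := by
        rw [key_expansion a b, hu1, hu2]
        refine congrArg (HAdd.hAdd _) ?_
        refine Finset.sum_congr rfl fun S _ => ?_
        rw [hu3 S]
        refine congrArg (HMul.hMul _) ?_
        exact Finset.prod_congr rfl fun i _ => (hsum i).symm
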